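/- Under the same replication structure, the predictive variances agree: c(x,x) − c_N(x)ᵀ(C_N + Λ_N)⁻¹ c_N(x) = c(x,x) − c_n(x)ᵀ(C_n + Λ_n A_n⁻¹)⁻¹ c_n(x). -/

import Mathlib

open Matrix Finset

/-- Under replication, the kriging predictive variances computed from the full
data and from the averaged data (with effective noise Λₙ Aₙ⁻¹) agree. -/
theorem kriging_variance_replication_equivalence {N n : ℕ}
    (blk : Fin N → Fin n) (hsurj : Function.Surjective blk)
    (Cn : Matrix (Fin n) (Fin n) ℝ) (r : Fin n → ℝ) (σ2 cxx : ℝ)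
    (hr : ∀ i, 0 < r i) (hσ : 0 < σ2)
    (cn : Fin n → ℝ)
    (CN : Matrix (Fin N) (Fin N) ℝ) (hCN : ∀ j k, CN j k = Cn (blk j) (blk k))
    (ΛN : Matrix (Fin N) (Fin N) ℝ)
    (hΛN : ΛN = Matrix.diagonal fun j => r (blk j) / σ2)
    (cN : Fin N → ℝ) (hcN : ∀ j, cN j = cn (blk j))
    (a : Fin n → ℕ) (ha : ∀ i, a i = (Finset.univ.filter fun j => blk j = i).card)
    (An Λn : Matrix (Fin n) (Fin n) ℝ)
    (hAn : An = Matrix.diagonal fun i => (a i : ℝ))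
    (hΛn : Λn = Matrix.diagonal fun i => r i / σ2)
    (hinv : IsUnit (CN + ΛN).det) (hPD : (Cn + Λn * An⁻¹).PosDef) :
    cxx - cN ⬝ᵥ (CN + ΛN)⁻¹ *ᵥ cN = cxx - cn ⬝ᵥ (Cn + Λn * An⁻¹)⁻¹ *ᵥ cn := by
  set P : Matrix (Fin N) (Fin n) ℝ := fun j i => if blk j = i then 1 else 0 with hP
  -- basic facts
  have hapos : ∀ i, 0 < a i := by
    intro i
    obtain ⟨j, hj⟩ := hsurj i
    rw [ha]
    exact Finset.card_pos.mpr ⟨j, by simp [hj]⟩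
  have hAnUnit : IsUnit An.det := by
    rw [hAn, Matrix.det_diagonal]
    refine isUnit_iff_ne_zero.mpr (Finset.prod_ne_zero_iff.mpr fun i _ => ?_)
    exact_mod_cast (hapos i).ne'
  have hMUnit : IsUnit (Cn + Λn * An⁻¹).det :=
    isUnit_iff_ne_zero.mpr (ne_of_gt hPD.det_pos)
  have hPtP : Pᵀ * P = An := by
    ext i k
    simp only [Matrix.mul_apply, Matrix.transpose_apply]
    simp only [Matrix.mul_apply, Matrix.transpose_apply, hP, hAn, Matrix.diagonal_apply]
    by_cases hik : i = k
    · subst hik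
      rw [ha i, if_pos rfl, Finset.card_filter]
      push_cast
      exact Finset.sum_congr rfl fun j _ => by by_cases h : blk j = i <;> simp [h]
    · simp only [hik, if_false]
      apply Finset.sum_eq_zero
      intro j _
      by_cases h1 : blk j = i
      · simp [h1, hik, (h1 ▸ hik : ¬ blk j = k)]
      · simp [h1]
  have hCNP : CN = P * Cn * Pᵀ := by
    ext j k
    rw [hCN]
    simp only [Matrix.mul_apply, Matrix.transpose_apply]
    simp only [Matrix.mul_apply, Matrix.transpose_apply, hP]
    have h1 : ∀ x, (∑ l, (if blk j = l then (1:ℝ) else 0) * Cn l x) = Cn (blk j) x :=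
      fun x => by simp
    simp only [h1]
    simp
  have hΛNP : ΛN * P = P * Λn := by
    ext j i
    rw [hΛN, hΛn, Matrix.diagonal_mul, Matrix.mul_diagonal]
    by_cases h : blk j = i <;> simp [hP, h]
  have hcNP : cN = P *ᵥ cn := by
    ext j
    simp [hcN, Matrix.mulVec, dotProduct, hP]
  -- the candidate solution
  set w : Fin n → ℝ := (Cn + Λn * An⁻¹)⁻¹ *ᵥ cn with hw
  set v : Fin N → ℝ := P *ᵥ (An⁻¹ *ᵥ w) with hv
  have hMw : (Cn + Λn * An⁻¹) *ᵥ w = cn := by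
    rw [hw, Matrix.mulVec_mulVec, Matrix.mul_nonsing_inv _ hMUnit, Matrix.one_mulVec]
  have hsolve : (CN + ΛN) *ᵥ v = cN := by
    have key : (CN + ΛN) * P * An⁻¹ = P * (Cn + Λn * An⁻¹) := by
      rw [Matrix.add_mul, hCNP, Matrix.mul_assoc (P * Cn) Pᵀ P, hPtP, hΛNP, Matrix.add_mul,
        Matrix.mul_assoc (P * Cn) An An⁻¹, Matrix.mul_nonsing_inv _ hAnUnit, Matrix.mul_one,
        Matrix.mul_assoc P Λn An⁻¹, Matrix.mul_add]
    rw [hv, Matrix.mulVec_mulVec, Matrix.mulVec_mulVec, key, ← Matrix.mulVec_mulVec, hMw, hcNP]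
  have hvinv : (CN + ΛN)⁻¹ *ᵥ cN = v := by
    rw [← hsolve, Matrix.mulVec_mulVec, Matrix.nonsing_inv_mul _ hinv, Matrix.one_mulVec]
  rw [hvinv]
  congr 1
  -- cN ⬝ᵥ v = cn ⬝ᵥ w
  calc cN ⬝ᵥ v = (P *ᵥ cn) ⬝ᵥ (P *ᵥ (An⁻¹ *ᵥ w)) := by rw [hcNP, hv]
    _ = cn ⬝ᵥ (Pᵀ * P) *ᵥ (An⁻¹ *ᵥ w) := by
        rw [dotProduct_comm, Matrix.dotProduct_mulVec, ← Matrix.mulVec_transpose,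
          dotProduct_comm, Matrix.dotProduct_mulVec, Matrix.dotProduct_mulVec,
          Matrix.vecMul_vecMul, ← Matrix.dotProduct_mulVec]
    _ = cn ⬝ᵥ w := by
        rw [hPtP, Matrix.mulVec_mulVec, Matrix.mul_nonsing_inv _ hAnUnit, Matrix.one_mulVec]
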